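/- Let M be a real n×n Hurwitz matrix, let μ > 0, and let P be the symmetric positive definite matrix solving the Lyapunov equation P·M + Mᵀ·P = −2μ·Iₙ. Then λ_max(P)·α(M) ≤ −μ, where λ_max(P) is the largest eigenvalue of P and α(M) is the largest real part among the complex eigenvalues of M (the spectral abscissa of M). -/

import Mathlib

open Matrix
open scoped ComplexOrder

lemma aux_self_re {n : ℕ} (v : Fin n → ℂ) (hv : v ≠ 0) : 0 < (star v ⬝ᵥ v).re := by
  have := (Matrix.PosDef.one (n := Fin n) (R := ℂ)).re_dotProduct_pos hv
  simpa [Matrix.one_mulVec] using this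

lemma aux_posdef_re {n : ℕ} {Q : Matrix (Fin n) (Fin n) ℝ} (hQ : Q.PosDef)
    (v : Fin n → ℂ) (hv : v ≠ 0) :
    0 < (star v ⬝ᵥ ((Q.map Complex.ofReal) *ᵥ v)).re := by
  set x : Fin n → ℝ := fun i => (v i).re with hx
  set y : Fin n → ℝ := fun i => (v i).im with hy
  have key : (star v ⬝ᵥ ((Q.map Complex.ofReal) *ᵥ v)).re
      = x ⬝ᵥ (Q *ᵥ x) + y ⬝ᵥ (Q *ᵥ y) := by
    simp only [dotProduct, mulVec, map_apply, Pi.star_apply, Finset.mul_sum,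
      Complex.re_sum, ← Finset.sum_add_distrib]
    refine Finset.sum_congr rfl fun i _ => ?_
    refine Finset.sum_congr rfl fun j _ => ?_
    simp only [Complex.star_def, Complex.mul_re, Complex.mul_im, Complex.conj_re,
      Complex.conj_im, Complex.ofReal_re, Complex.ofReal_im, hx, hy]
    ring
  have hxy : x ≠ 0 ∨ y ≠ 0 := by
    by_contra h
    push_neg at h
    apply hv
    funext i
    have h1 : x i = 0 := by rw [h.1]; rfl
    have h2 : y i = 0 := by rw [h.2]; rfl
    exact Complex.ext h1 h2
  have hxx : ∀ u : Fin n → ℝ, 0 ≤ u ⬝ᵥ (Q *ᵥ u) := by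
    intro u
    have := hQ.posSemidef.dotProduct_mulVec_nonneg u
    simpa using this
  rw [key]
  rcases hxy with h | h
  · have := hQ.dotProduct_mulVec_pos h
    simp only [star_trivial] at this
    linarith [hxx y]
  · have := hQ.dotProduct_mulVec_pos h
    simp only [star_trivial] at this
    linarith [hxx x]


lemma aux_spec_map {n : ℕ} (Q : Matrix (Fin n) (Fin n) ℝ) :
    spectrum ℝ (Q.map Complex.ofReal) ⊆ spectrum ℝ Q := by
  intro r hr
  rw [spectrum.mem_iff] at hr ⊢
  intro hu
  apply hr
  have h2 := hu.map (Complex.ofRealHom.mapMatrix (m := Fin n))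
  have h3 : (Complex.ofRealHom.mapMatrix (m := Fin n))
      (algebraMap ℝ (Matrix (Fin n) (Fin n) ℝ) r - Q)
      = algebraMap ℝ (Matrix (Fin n) (Fin n) ℂ) r - Q.map Complex.ofReal := by
    rw [map_sub]
    congr 1
    · rw [RingHom.mapMatrix_apply]
      exact Matrix.map_algebraMap r Complex.ofReal (by simp) (by simp)
  rwa [h3] at h2

lemma aux_rayleigh {n : ℕ} {A : Matrix (Fin n) (Fin n) ℂ} (hA : A.IsHermitian)
    {t : ℝ} (ht : ∀ i, hA.eigenvalues i ≤ t) (v : Fin n → ℂ) :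
    (star v ⬝ᵥ (A *ᵥ v)).re ≤ t * (star v ⬝ᵥ v).re := by
  set U : Matrix (Fin n) (Fin n) ℂ := ↑hA.eigenvectorUnitary with hU
  set w : Fin n → ℂ := (star U) *ᵥ v with hw
  have hUU : U * star U = 1 := mem_unitaryGroup_iff.mp hA.eigenvectorUnitary.2
  have hsw : star w = star v ᵥ* U := by
    rw [hw, star_mulVec, star_eq_conjTranspose, conjTranspose_conjTranspose]
  have hvw : v = U *ᵥ w := by rw [hw, mulVec_mulVec, hUU, one_mulVec]
  have hvA : star v ⬝ᵥ (A *ᵥ v)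
      = star w ⬝ᵥ ((diagonal (Complex.ofReal ∘ hA.eigenvalues)) *ᵥ w) := by
    conv_lhs => rw [hA.spectral_theorem, Unitary.conjStarAlgAut_apply, ← hU]
    rw [← mulVec_mulVec, ← mulVec_mulVec, ← hw, dotProduct_mulVec, ← hsw]
    rfl
  have hvv : star v ⬝ᵥ v = star w ⬝ᵥ w := by
    nth_rewrite 2 [hvw]
    rw [dotProduct_mulVec, ← hsw]
  rw [hvA, hvv]
  have h1 : (star w ⬝ᵥ ((diagonal (Complex.ofReal ∘ hA.eigenvalues)) *ᵥ w)).re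
      = ∑ i, hA.eigenvalues i * Complex.normSq (w i) := by
    simp only [dotProduct, mulVec_diagonal, Pi.star_apply, Complex.re_sum,
      Function.comp_apply]
    refine Finset.sum_congr rfl fun i _ => ?_
    simp only [Complex.star_def, Complex.mul_re, Complex.mul_im, Complex.conj_re,
      Complex.conj_im, Complex.ofReal_re, Complex.ofReal_im, Complex.normSq_apply]
    ring
  have h2 : (star w ⬝ᵥ w).re = ∑ i, Complex.normSq (w i) := by
    simp only [dotProduct, Pi.star_apply, Complex.re_sum]
    refine Finset.sum_congr rfl fun i _ => ?_
    simp [Complex.star_def, Complex.mul_re, Complex.normSq_apply]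
  rw [h1, h2, Finset.mul_sum]
  exact Finset.sum_le_sum fun i _ =>
    mul_le_mul_of_nonneg_right (ht i) (Complex.normSq_nonneg _)


/-- A real square matrix is Hurwitz if every eigenvalue of its complexification
has strictly negative real part. -/
def IsHurwitz {m : Type*} [Fintype m] [DecidableEq m] (M : Matrix m m ℝ) : Prop :=
  ∀ z ∈ spectrum ℂ (M.map Complex.ofReal), z.re < 0

/-- The largest eigenvalue of a (symmetric) real matrix, expressed as the
supremum of its real spectrum. -/
noncomputable def maxEig {n : ℕ} (M : Matrix (Fin n) (Fin n) ℝ) : ℝ :=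
  sSup (spectrum ℝ M)

/-- The spectral abscissa of a real matrix: the largest real part among the
eigenvalues of its complexification. -/
noncomputable def specAbscissa {n : ℕ} (M : Matrix (Fin n) (Fin n) ℝ) : ℝ :=
  sSup (Complex.re '' spectrum ℂ (M.map Complex.ofReal))

/-- inequality (32) of the paper's Lemma 5: if `M` is Hurwitz,
`μ > 0` and `P` is the symmetric positive definite solution of
`P * M + Mᵀ * P = -(2μ) • 1`, then `λ_max(P) * α(M) ≤ -μ`. -/
theorem maxEig_mul_specAbscissa_le {n : ℕ} (hn : 0 < n)
    (M P : Matrix (Fin n) (Fin n) ℝ) (hM : IsHurwitz M)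
    (μ : ℝ) (hμ : 0 < μ) (hP : P.PosDef)
    (hLyap : P * M + Mᵀ * P = (-(2 * μ)) • (1 : Matrix (Fin n) (Fin n) ℝ)) :
    maxEig P * specAbscissa M ≤ -μ := by
  haveI : Nonempty (Fin n) := ⟨⟨0, hn⟩⟩
  set Mc : Matrix (Fin n) (Fin n) ℂ := M.map Complex.ofReal with hMcdef
  set Pc : Matrix (Fin n) (Fin n) ℂ := P.map Complex.ofReal with hPcdef
  have hPcHerm : Pc.IsHermitian :=
    hP.1.map Complex.ofReal (fun a => by simp [Complex.conj_ofReal])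
  set t : ℝ := maxEig P with htdef
  have hbdd : BddAbove (spectrum ℝ P) := (Matrix.finite_spectrum P).bddAbove
  have hev_le : ∀ i, hPcHerm.eigenvalues i ≤ t := fun i =>
    le_csSup hbdd (aux_spec_map P (hPcHerm.eigenvalues_mem_spectrum_real i))
  have ht : 0 < t := by
    have i : Fin n := ⟨0, hn⟩
    have h1 := hP.eigenvalues_pos i
    exact lt_of_lt_of_le h1 (le_csSup hbdd (hP.1.eigenvalues_mem_spectrum_real i))
  -- complexified Lyapunov equation
  have hmul : ∀ A B : Matrix (Fin n) (Fin n) ℝ,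
      (A * B).map Complex.ofReal = A.map Complex.ofReal * B.map Complex.ofReal :=
    fun A B => Matrix.map_mul (f := Complex.ofRealHom)
  have hLc : Pc * Mc + Mcᵀ * Pc
      = ((-(2 * μ) : ℝ) : ℂ) • (1 : Matrix (Fin n) (Fin n) ℂ) := by
    have h0 := congrArg (fun X : Matrix (Fin n) (Fin n) ℝ => X.map Complex.ofReal) hLyap
    rw [Matrix.map_add Complex.ofReal (by push_cast; intros; ring), hmul, hmul] at h0
    have htr : Mᵀ.map Complex.ofReal = Mcᵀ := by
      rw [hMcdef, transpose_map]
    rw [htr] at h0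
    rw [h0]
    ext i j
    simp only [Matrix.map_apply, Matrix.smul_apply, Matrix.one_apply, smul_eq_mul]
    split <;> push_cast <;> ring
  have hMcH : Mcᵀ = Mcᴴ := by
    ext i j
    simp [conjTranspose_apply, hMcdef, Complex.conj_ofReal]
  -- key spectral bound
  have key : ∀ z ∈ spectrum ℂ Mc, t * z.re ≤ -μ := by
    intro z hz
    have hzneg : z.re < 0 := hM z hz
    rw [← AlgEquiv.spectrum_eq (Matrix.toLinAlgEquiv' (R := ℂ) (n := Fin n)),
      ← Module.End.hasEigenvalue_iff_mem_spectrum] at hz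
    obtain ⟨v, hv⟩ := hz.exists_hasEigenvector
    have hv0 : v ≠ 0 := hv.right
    have hMv : Mc *ᵥ v = z • v := by
      have h := hv.apply_eq_smul
      rwa [Matrix.toLinAlgEquiv'_apply] at h
    set c : ℂ := star v ⬝ᵥ (Pc *ᵥ v) with hcdef
    set s : ℂ := star v ⬝ᵥ v with hsdef
    have hcpos : 0 < c.re := aux_posdef_re hP v hv0
    have hspos : 0 < s.re := aux_self_re v hv0
    have e1 : star v ⬝ᵥ ((Pc * Mc) *ᵥ v) = z * c := by
      rw [← mulVec_mulVec, hMv, mulVec_smul, dotProduct_smul, smul_eq_mul]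
    have e2 : star v ⬝ᵥ ((Mcᵀ * Pc) *ᵥ v) = (starRingEnd ℂ z) * c := by
      rw [← mulVec_mulVec, dotProduct_mulVec, hMcH, ← star_mulVec, hMv, star_smul,
        smul_dotProduct, smul_eq_mul]
      rfl
    have e3 : star v ⬝ᵥ ((((-(2 * μ) : ℝ) : ℂ) • (1 : Matrix (Fin n) (Fin n) ℂ)) *ᵥ v)
        = ((-(2 * μ) : ℝ) : ℂ) * s := by
      rw [smul_mulVec, one_mulVec, dotProduct_smul, smul_eq_mul]
    have hsum : z * c + (starRingEnd ℂ z) * c = ((-(2 * μ) : ℝ) : ℂ) * s := by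
      rw [← e1, ← e2, ← dotProduct_add, ← add_mulVec, hLc]
      exact e3
    have hre := congrArg Complex.re hsum
    simp only [Complex.add_re, Complex.mul_re, Complex.conj_re, Complex.conj_im,
      Complex.ofReal_re, Complex.ofReal_im] at hre
    have hray : c.re ≤ t * s.re := aux_rayleigh hPcHerm hev_le v
    nlinarith [mul_le_mul_of_nonpos_left hray hzneg.le, mul_pos hspos hμ]
  -- conclude
  have hne : (spectrum ℂ Mc).Nonempty :=
    spectrum.nonempty_of_isAlgClosed_of_finiteDimensional ℂ Mc
  have hub : specAbscissa M ≤ -μ / t := by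
    apply csSup_le (hne.image _)
    rintro r ⟨z, hz, rfl⟩
    rw [le_div_iff₀ ht]
    linarith [key z hz]
  have h2 := mul_le_mul_of_nonneg_left hub ht.le
  have h3 : t * (-μ / t) = -μ := by field_simp
  calc maxEig P * specAbscissa M = t * specAbscissa M := rfl
    _ ≤ t * (-μ / t) := h2
    _ = -μ := h3
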